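/- Let R be a commutative ring, B a commutative R-algebra, I an ideal of B, A := B/I with quotient map φ : B → A, and M an A-module. Let (E, π, ι) and (E′, π′, ι′) be square-zero extensions of A by M, and let λ : B → E and λ′ : B → E′ be R-algebra homomorphisms with π ∘ λ = φ and π′ ∘ λ′ = φ. Since λ(I) ⊆ ker π and λ(I²) = 0, there are unique A-linear maps ν, ν′ : I/I² → M with ι(ν(x + I²)) = λ(x) and ι′(ν′(x + I²)) = λ′(x) for all x ∈ I. Then there exists an isomorphism of square-zero extensions f : (E, π, ι) → (E′, π′, ι′) if and only if there exists an A-linear map θ : Ω_{B/R} ⊗_B A → M with θ ∘ d = ν′ − ν, where d : I/I² → Ω_{B/R} ⊗_B A sends the class of x ∈ I to dx ⊗ 1. -/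
import Mathlib


open TensorProduct

universe u v w

/-- A square-zero extension of a commutative `R`-algebra `A` by an `A`-module `M`. -/
structure SquareZeroExtension (R : Type u) (A : Type v) (M : Type w)
    [CommRing R] [CommRing A] [Algebra R A] [AddCommGroup M] [Module A M] where
  /-- The underlying algebra of the extension. -/
  E : Type (max u v w)
  [commRing : CommRing E]
  [algebra : Algebra R E]
  /-- The projection onto `A`. -/
  π : E →ₐ[R] A
  surjective : Function.Surjective π
  squareZero : ∀ x ∈ RingHom.ker π, ∀ y ∈ RingHom.ker π, x * y = 0
  /-- The identification of `M` with the kernel of `π`. -/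
  ι : M ≃+ RingHom.ker π
  ι_linear : ∀ (a : A) (m : M) (e : E), π e = a → ((ι (a • m) : E) = e * (ι m : E))

attribute [instance] SquareZeroExtension.commRing SquareZeroExtension.algebra

/-- An isomorphism of square-zero extensions `(E, π, ι) → (E′, π′, ι′)` is an `R`-algebra
isomorphism `f : E → E′` with `π′ ∘ f = π` and `f ∘ ι = ι′`. -/
def SquareZeroExtension.Iso {R : Type u} {A : Type v} {M : Type w}
    [CommRing R] [CommRing A] [Algebra R A] [AddCommGroup M] [Module A M]
    (S S' : SquareZeroExtension R A M) : Prop :=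
  ∃ f : S.E ≃ₐ[R] S'.E, (∀ e : S.E, S'.π (f e) = S.π e) ∧
    ∀ m : M, f (S.ι m : S.E) = (S'.ι m : S'.E)

section Aux

variable {R : Type u} {B : Type v} [CommRing R] [CommRing B] [Algebra R B]
  {I : Ideal B} {M : Type w} [AddCommGroup M] [Module (B ⧸ I) M]
  (S : SquareZeroExtension R (B ⧸ I) M) (l : B →ₐ[R] S.E)
  (hl : S.π.comp l = Ideal.Quotient.mkₐ R I)

include hl in
lemma aux_pi_l (b : B) : S.π (l b) = Ideal.Quotient.mk I b := by
  have := AlgHom.congr_fun hl b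
  simpa using this

lemma aux_pi_iota (m : M) : S.π (S.ι m : S.E) = 0 := (S.ι m).2

lemma aux_iota_add (m m' : M) : (S.ι (m + m') : S.E) = S.ι m + S.ι m' := by
  rw [map_add]; rfl

lemma aux_iota_sub (m m' : M) : (S.ι (m - m') : S.E) = S.ι m - S.ι m' := by
  rw [map_sub]; rfl

lemma aux_iota_zero : (S.ι (0 : M) : S.E) = 0 := by rw [map_zero]; rfl

include hl in
lemma aux_pi_rep (b : B) (m : M) :
    S.π (l b + S.ι m) = Ideal.Quotient.mk I b := by
  rw [map_add, aux_pi_l S l hl, aux_pi_iota, add_zero]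

include hl in
lemma aux_mul_iota (b : B) (m : M) :
    l b * (S.ι m : S.E) = S.ι ((Ideal.Quotient.mk I b) • m) :=
  (S.ι_linear (Ideal.Quotient.mk I b) m (l b) (aux_pi_l S l hl b)).symm

lemma aux_iota_mul_iota (m m' : M) : (S.ι m : S.E) * (S.ι m' : S.E) = 0 :=
  S.squareZero _ (S.ι m).2 _ (S.ι m').2

include hl in
lemma aux_rep (e : S.E) : ∃ (b : B) (m : M), e = l b + S.ι m := by
  obtain ⟨b, hb⟩ := Ideal.Quotient.mk_surjective (S.π e)
  have hmem : e - l b ∈ RingHom.ker S.π := by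
    simp [RingHom.mem_ker, map_sub, aux_pi_l S l hl, hb]
  refine ⟨b, S.ι.symm ⟨e - l b, hmem⟩, ?_⟩
  have : (S.ι (S.ι.symm ⟨e - l b, hmem⟩) : S.E) = e - l b := by
    rw [S.ι.apply_symm_apply]
  rw [this]; ring

include hl in
lemma aux_mul (b₁ b₂ : B) (m₁ m₂ : M) :
    (l b₁ + S.ι m₁) * (l b₂ + S.ι m₂) =
      l (b₁ * b₂) + S.ι ((Ideal.Quotient.mk I b₁) • m₂ + (Ideal.Quotient.mk I b₂) • m₁) := by
  rw [aux_iota_add, map_mul]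
  have h1 := aux_mul_iota S l hl b₁ m₂
  have h2 := aux_mul_iota S l hl b₂ m₁
  have h3 := aux_iota_mul_iota S m₁ m₂
  ring_nf
  rw [← h1, ← h2]
  ring_nf
  rw [mul_comm ((S.ι m₁ : S.E)) ((S.ι m₂ : S.E))] at h3
  linear_combination h3

lemma aux_eq_iota (m : M) (x : S.E) (hx : x ∈ RingHom.ker S.π)
    (h : x = S.ι m) : S.ι.symm ⟨x, hx⟩ = m := by
  apply S.ι.injective
  rw [S.ι.apply_symm_apply]
  exact Subtype.ext h

end Aux

/-- **Full faithfulness in Proposition 2 (ext1prop)** of "Equivariant deformations of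
singular curves with group scheme action": for a presentation `A = B/I` of a commutative
`R`-algebra, an `A`-module `M`, two square-zero extensions `(E, π, ι)`, `(E′, π′, ι′)` of
`A` by `M` with lifts `λ : B → E`, `λ′ : B → E′` of the quotient map, and `ν, ν′ : I/I² → M`
the induced `A`-linear maps (determined by `ι(ν(x + I²)) = λ(x)` resp.
`ι′(ν′(x + I²)) = λ′(x)`), the extensions are isomorphic if and only if there is an
`A`-linear map `θ : Ω_{B/R} ⊗_B A → M` with `θ ∘ d = ν′ − ν`. -/
theorem squareZeroExtension_iso_iff_exists_theta
    (R : Type u) (B : Type v) [CommRing R] [CommRing B] [Algebra R B]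
    (I : Ideal B) (M : Type w) [AddCommGroup M] [Module (B ⧸ I) M]
    (S S' : SquareZeroExtension R (B ⧸ I) M)
    (l : B →ₐ[R] S.E) (l' : B →ₐ[R] S'.E)
    (hl : S.π.comp l = Ideal.Quotient.mkₐ R I)
    (hl' : S'.π.comp l' = Ideal.Quotient.mkₐ R I)
    (ν ν' : I.Cotangent →ₗ[B ⧸ I] M)
    (hν : ∀ x : I, (S.ι (ν (I.toCotangent x)) : S.E) = l x)
    (hν' : ∀ x : I, (S'.ι (ν' (I.toCotangent x)) : S'.E) = l' x) :
    S.Iso S' ↔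
      ∃ θ : ((B ⧸ I) ⊗[B] Ω[B⁄R]) →ₗ[B ⧸ I] M,
        ∀ x : I, θ ((1 : B ⧸ I) ⊗ₜ[B] KaehlerDifferential.D R B (x : B)) =
          ν' (I.toCotangent x) - ν (I.toCotangent x) := by
  classical
  constructor
  · rintro ⟨f, hfπ, hfι⟩
    -- module structures on M over B and R
    letI : Module B M := Module.compHom M (Ideal.Quotient.mk I : B →+* B ⧸ I)
    have hsmulB : ∀ (b : B) (m : M), b • m = (Ideal.Quotient.mk I b) • m := fun _ _ => rfl
    letI : Module R M := Module.compHom M ((algebraMap R (B ⧸ I)) : R →+* B ⧸ I)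
    have hsmulR : ∀ (r : R) (m : M), r • m = (algebraMap R (B ⧸ I) r) • m := fun _ _ => rfl
    haveI : IsScalarTower B (B ⧸ I) M := by
      constructor
      intro b a m
      rw [Algebra.smul_def, Ideal.Quotient.algebraMap_eq, mul_smul, hsmulB]
    haveI : IsScalarTower R B M := by
      constructor
      intro r b m
      rw [hsmulB, hsmulB, hsmulR, Algebra.smul_def, map_mul, mul_smul,
        IsScalarTower.algebraMap_apply R B (B ⧸ I), Ideal.Quotient.algebraMap_eq]
    -- the difference of the two lifts, as a map to M
    have hker : ∀ b : B, l' b - f (l b) ∈ RingHom.ker S'.π := by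
      intro b
      simp only [RingHom.mem_ker, map_sub, hfπ, aux_pi_l S l hl, aux_pi_l S' l' hl', sub_self]
    set δ : B → M := fun b => S'.ι.symm ⟨l' b - f (l b), hker b⟩ with hδ
    have hδspec : ∀ b : B, (S'.ι (δ b) : S'.E) = l' b - f (l b) := by
      intro b
      rw [hδ]
      simp only
      rw [S'.ι.apply_symm_apply]
    have injι : ∀ m m' : M, ((S'.ι m : S'.E) = (S'.ι m' : S'.E)) → m = m' := by
      intro m m' h
      exact S'.ι.injective (Subtype.ext h)
    -- δ is an R-derivation
    have hδadd : ∀ a b : B, δ (a + b) = δ a + δ b := by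
      intro a b
      apply injι
      rw [aux_iota_add, hδspec, hδspec, hδspec, map_add, map_add, map_add]
      ring
    have hδsmul : ∀ (r : R) (b : B), δ (r • b) = r • δ b := by
      intro r b
      apply injι
      rw [hδspec, hsmulR]
      have : (S'.ι ((algebraMap R (B ⧸ I) r) • δ b) : S'.E)
          = algebraMap R S'.E r * (S'.ι (δ b) : S'.E) :=
        S'.ι_linear _ _ _ (S'.π.commutes r)
      rw [this, hδspec, map_smul, map_smul, map_smul, mul_sub, Algebra.smul_def, Algebra.smul_def]
    have hδleibniz : ∀ a b : B, δ (a * b) = a • δ b + b • δ a := by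
      intro a b
      apply injι
      rw [aux_iota_add, hsmulB, hsmulB]
      have h1 : (S'.ι ((Ideal.Quotient.mk I a) • δ b) : S'.E)
          = l' a * (S'.ι (δ b) : S'.E) :=
        S'.ι_linear _ _ _ (aux_pi_l S' l' hl' a)
      have h2 : (S'.ι ((Ideal.Quotient.mk I b) • δ a) : S'.E)
          = f (l b) * (S'.ι (δ a) : S'.E) := by
        refine S'.ι_linear _ _ _ ?_
        rw [hfπ, aux_pi_l S l hl]
      rw [h1, h2, hδspec, hδspec, hδspec, map_mul, map_mul, map_mul]
      ring
    let Dv : Derivation R B M :=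
      { toFun := δ
        map_add' := hδadd
        map_smul' := hδsmul
        map_one_eq_zero' := by
          apply injι
          show (S'.ι (δ 1) : S'.E) = (S'.ι 0 : S'.E)
          rw [hδspec, map_one, map_one, map_one, sub_self, aux_iota_zero]
        leibniz' := hδleibniz }
    refine ⟨Dv.liftKaehlerDifferential.liftBaseChange (B ⧸ I), ?_⟩
    intro x
    rw [LinearMap.liftBaseChange_tmul, Derivation.liftKaehlerDifferential_comp_D, one_smul]
    show δ (x : B) = _
    apply injι
    rw [hδspec, aux_iota_sub, hν', ← hν x, hfι]
  · rintro ⟨θ, hθ⟩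
    set δ : B → M := fun b => θ ((1 : B ⧸ I) ⊗ₜ[B] KaehlerDifferential.D R B b) with hδ
    have hδadd : ∀ a b : B, δ (a + b) = δ a + δ b := by
      intro a b
      rw [hδ]
      simp only [map_add, tmul_add]
    have hδI : ∀ x : I, δ (x : B) = ν' (I.toCotangent x) - ν (I.toCotangent x) := hθ
    have hδmul : ∀ a b : B,
        δ (a * b) = (Ideal.Quotient.mk I a) • δ b + (Ideal.Quotient.mk I b) • δ a := by
      intro a b
      rw [hδ]
      simp only [Derivation.leibniz, tmul_add, tmul_smul, map_add]
      rw [← algebraMap_smul (B ⧸ I) a, ← algebraMap_smul (B ⧸ I) b, map_smul, map_smul]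
      rfl
    have hδalg : ∀ r : R, δ (algebraMap R B r) = 0 := by
      intro r
      rw [hδ]
      simp only [Derivation.map_algebraMap, tmul_zero, map_zero]
    have hδzero : δ 0 = 0 := by
      rw [hδ]; simp only [map_zero, tmul_zero]
    -- key computation lemmas
    have injι : ∀ m m' : M, ((S.ι m : S.E) = (S.ι m' : S.E)) → m = m' := by
      intro m m' h
      exact S.ι.injective (Subtype.ext h)
    have injι' : ∀ m m' : M, ((S'.ι m : S'.E) = (S'.ι m' : S'.E)) → m = m' := by
      intro m m' h
      exact S'.ι.injective (Subtype.ext h)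
    obtain ⟨σ, hσ⟩ : ∃ σ : B ⧸ I → B, ∀ a, Ideal.Quotient.mk I (σ a) = a :=
      ⟨fun a => (Ideal.Quotient.mk_surjective a).choose,
        fun a => (Ideal.Quotient.mk_surjective a).choose_spec⟩
    have hmem : ∀ (e : S.E), e - l (σ (S.π e)) ∈ RingHom.ker S.π := by
      intro e
      simp [RingHom.mem_ker, map_sub, aux_pi_l S l hl, hσ]
    have hmem' : ∀ (e : S'.E), e - l' (σ (S'.π e)) ∈ RingHom.ker S'.π := by
      intro e
      simp [RingHom.mem_ker, map_sub, aux_pi_l S' l' hl', hσ]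
    set F : S.E → S'.E := fun e =>
      l' (σ (S.π e)) + (S'.ι (S.ι.symm ⟨e - l (σ (S.π e)), hmem e⟩ - δ (σ (S.π e))) : S'.E)
      with hF
    set G : S'.E → S.E := fun e =>
      l (σ (S'.π e)) + (S.ι (S'.ι.symm ⟨e - l' (σ (S'.π e)), hmem' e⟩ + δ (σ (S'.π e))) : S.E)
      with hG
    -- difference lemma
    have hdiff : ∀ (b b' : B), Ideal.Quotient.mk I b = Ideal.Quotient.mk I b' →
        ∃ x : I, b = b' + (x : B) := by
      intro b b' h
      exact ⟨⟨b - b', Ideal.Quotient.eq.1 h⟩, by ring⟩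
    have KF : ∀ (b : B) (m : M), F (l b + S.ι m) = l' b + (S'.ι (m - δ b) : S'.E) := by
      intro b m
      rw [hF]
      simp only
      set b₀ := σ (S.π (l b + S.ι m)) with hb₀
      have hmk : Ideal.Quotient.mk I b₀ = Ideal.Quotient.mk I b := by
        rw [hb₀, hσ, aux_pi_rep S l hl]
      obtain ⟨x, hx⟩ := hdiff b₀ b hmk
      have hl0 : l b₀ = l b + (S.ι (ν (I.toCotangent x)) : S.E) := by
        rw [hν, hx, map_add]
      have hsymm : S.ι.symm ⟨(l b + S.ι m) - l b₀, hmem _⟩ = m - ν (I.toCotangent x) := by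
        apply aux_eq_iota
        rw [aux_iota_sub, hl0]
        ring
      rw [hsymm]
      have hδb₀ : δ b₀ = δ b + (ν' (I.toCotangent x) - ν (I.toCotangent x)) := by
        rw [hx, hδadd, hδI]
      have hl'0 : l' b₀ = l' b + (S'.ι (ν' (I.toCotangent x)) : S'.E) := by
        rw [hν', hx, map_add]
      rw [hl'0, hδb₀]
      have : m - ν (I.toCotangent x) - (δ b + (ν' (I.toCotangent x) - ν (I.toCotangent x)))
          = (m - δ b) - ν' (I.toCotangent x) := by abel
      rw [this, aux_iota_sub]
      ring
    have KG : ∀ (b : B) (m : M), G (l' b + S'.ι m) = l b + (S.ι (m + δ b) : S.E) := by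
      intro b m
      rw [hG]
      simp only
      set b₀ := σ (S'.π (l' b + S'.ι m)) with hb₀
      have hmk : Ideal.Quotient.mk I b₀ = Ideal.Quotient.mk I b := by
        rw [hb₀, hσ, aux_pi_rep S' l' hl']
      obtain ⟨x, hx⟩ := hdiff b₀ b hmk
      have hl0 : l' b₀ = l' b + (S'.ι (ν' (I.toCotangent x)) : S'.E) := by
        rw [hν', hx, map_add]
      have hsymm : S'.ι.symm ⟨(l' b + S'.ι m) - l' b₀, hmem' _⟩ = m - ν' (I.toCotangent x) := by
        apply aux_eq_iota
        rw [aux_iota_sub, hl0]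
        ring
      rw [hsymm]
      have hδb₀ : δ b₀ = δ b + (ν' (I.toCotangent x) - ν (I.toCotangent x)) := by
        rw [hx, hδadd, hδI]
      have hlb0 : l b₀ = l b + (S.ι (ν (I.toCotangent x)) : S.E) := by
        rw [hν, hx, map_add]
      rw [hlb0, hδb₀]
      have : m - ν' (I.toCotangent x) + (δ b + (ν' (I.toCotangent x) - ν (I.toCotangent x)))
          = (m + δ b) - ν (I.toCotangent x) := by abel
      rw [this, aux_iota_sub]
      ring
    have hGF : ∀ e : S.E, G (F e) = e := by
      intro e
      obtain ⟨b, m, rfl⟩ := aux_rep S l hl e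
      rw [KF, KG]
      congr 1
      apply congrArg
      apply congrArg
      abel
    have hFG : ∀ e : S'.E, F (G e) = e := by
      intro e
      obtain ⟨b, m, rfl⟩ := aux_rep S' l' hl' e
      rw [KG, KF]
      congr 1
      apply congrArg
      apply congrArg
      abel
    have hFadd : ∀ e₁ e₂ : S.E, F (e₁ + e₂) = F e₁ + F e₂ := by
      intro e₁ e₂
      obtain ⟨b₁, m₁, rfl⟩ := aux_rep S l hl e₁
      obtain ⟨b₂, m₂, rfl⟩ := aux_rep S l hl e₂
      have : (l b₁ + S.ι m₁) + (l b₂ + S.ι m₂) = l (b₁ + b₂) + S.ι (m₁ + m₂) := by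
        rw [map_add, aux_iota_add]; ring
      rw [this, KF, KF, KF, map_add, hδadd]
      have : m₁ + m₂ - (δ b₁ + δ b₂) = (m₁ - δ b₁) + (m₂ - δ b₂) := by abel
      rw [this, aux_iota_add]
      ring
    have hFmul : ∀ e₁ e₂ : S.E, F (e₁ * e₂) = F e₁ * F e₂ := by
      intro e₁ e₂
      obtain ⟨b₁, m₁, rfl⟩ := aux_rep S l hl e₁
      obtain ⟨b₂, m₂, rfl⟩ := aux_rep S l hl e₂
      rw [aux_mul S l hl, KF, KF, KF, aux_mul S' l' hl']
      congr 1
      apply congrArg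
      apply congrArg
      rw [hδmul, smul_sub, smul_sub]
      abel
    have hFcomm : ∀ r : R, F (algebraMap R S.E r) = algebraMap R S'.E r := by
      intro r
      have : algebraMap R S.E r = l (algebraMap R B r) + S.ι 0 := by
        rw [AlgHom.commutes, aux_iota_zero, add_zero]
      rw [this, KF, hδalg, sub_zero, aux_iota_zero, add_zero, AlgHom.commutes]
    let f : S.E ≃ₐ[R] S'.E :=
      { toFun := F
        invFun := G
        left_inv := hGF
        right_inv := hFG
        map_mul' := hFmul
        map_add' := hFadd
        commutes' := hFcomm }
    refine ⟨f, ?_, ?_⟩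
    · intro e
      obtain ⟨b, m, rfl⟩ := aux_rep S l hl e
      show S'.π (F (l b + S.ι m)) = _
      rw [KF, aux_pi_rep S' l' hl', aux_pi_rep S l hl]
    · intro m
      show F ((S.ι m : S.E)) = _
      have : (S.ι m : S.E) = l 0 + S.ι m := by rw [map_zero, zero_add]
      rw [this, KF, map_zero, zero_add, hδzero, sub_zero]
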